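/- arXiv:0906.0887 — 2 statements merged into one kernel-verified Lean document; each statement's English description precedes it below -/
import Mathlib

section
/- Let ∑_{i=1}^k αᵢ sᵢ ≥ 1 with α ∈ ℝ^k, α ≥ 0, be a valid inequality for conv(P(R,f)) such that L_α is not contained in any split set. Then L_α is bounded and αᵢ > 0 for all i = 1,…,k. -/
open Set Pointwise

abbrev Pt : Type := Fin 2 → ℝ

def IsIntPt (x : Pt) : Prop := ∀ j, ∃ z : ℤ, x j = (z : ℝ)

def IsRatPt (x : Pt) : Prop := ∀ j, ∃ q : ℚ, x j = (q : ℝ)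

/-- The mixed-integer set `P(R,f)`. -/
def mixedP (k : ℕ) (r : Fin k → Pt) (f : Pt) : Set (Pt × (Fin k → ℝ)) :=
  {p | IsIntPt p.1 ∧ (∀ i, 0 ≤ p.2 i) ∧ p.1 = f + ∑ i, p.2 i • r i}

/-- The linear relaxation `P(R,f)⁰`. -/
def relaxP (k : ℕ) (r : Fin k → Pt) (f : Pt) : Set (Pt × (Fin k → ℝ)) :=
  {p | (∀ i, 0 ≤ p.2 i) ∧ p.1 = f + ∑ i, p.2 i • r i}

/-- The convex cone generated by a set (all nonnegative combinations). -/
def coneGen (S : Set Pt) : Set Pt :=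
  {x | ∃ (n : ℕ) (c : Fin n → ℝ) (v : Fin n → Pt),
    (∀ j, 0 ≤ c j) ∧ (∀ j, v j ∈ S) ∧ x = ∑ j, c j • v j}

/-- The induced lattice-free set `L_α`. -/
def inducedSet (k : ℕ) (r : Fin k → Pt) (f : Pt) (α : Fin k → ℝ) : Set Pt :=
  convexHull ℝ ({f} ∪ {x | ∃ i, 0 < α i ∧ x = f + (α i)⁻¹ • r i}) +
    coneGen {x | ∃ i, α i = 0 ∧ x = r i}

def LatticeFree (S : Set Pt) : Prop := ∀ x ∈ interior S, ¬ IsIntPt x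

/-- Validity of `∑ αᵢ sᵢ ≥ γ` for `conv(P(R,f))`. -/
def ValidIneq (k : ℕ) (r : Fin k → Pt) (f : Pt) (α : Fin k → ℝ) (γ : ℝ) : Prop :=
  ∀ p ∈ mixedP k r f, γ ≤ ∑ i, α i * p.2 i

noncomputable def affDim {V : Type*} [AddCommGroup V] [Module ℝ V] (S : Set V) : ℕ :=
  Module.finrank ℝ (affineSpan ℝ S).direction

/-- Facet-defining inequality: valid and its face of the closed convex hull has
affine dimension exactly one less. -/
def IsFacet (k : ℕ) (r : Fin k → Pt) (f : Pt) (α : Fin k → ℝ) (γ : ℝ) : Prop :=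
  ValidIneq k r f α γ ∧
  affDim {p ∈ closure (convexHull ℝ (mixedP k r f)) | ∑ i, α i * p.2 i = γ} + 1 =
    affDim (convexHull ℝ (mixedP k r f))

def splitClosure (k : ℕ) (C : Set (Pt × (Fin k → ℝ))) : Set (Pt × (Fin k → ℝ)) :=
  ⋂ (π : Fin 2 → ℤ) (π₀ : ℤ),
    convexHull ℝ ((C ∩ {p | ∑ j, (π j : ℝ) * p.1 j ≤ (π₀ : ℝ)}) ∪
      (C ∩ {p | (π₀ : ℝ) + 1 ≤ ∑ j, (π j : ℝ) * p.1 j}))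

def closures (k : ℕ) (r : Fin k → Pt) (f : Pt) : ℕ → Set (Pt × (Fin k → ℝ))
  | 0 => relaxP k r f
  | n + 1 => splitClosure k (closures k r f n)

/-- The split rank of `∑ αᵢ sᵢ ≥ γ` w.r.t. `P(R,f)⁰`: least `j` such that the
inequality is valid on the `j`-th split closure, `⊤` if none exists. -/
noncomputable def splitRank (k : ℕ) (r : Fin k → Pt) (f : Pt) (α : Fin k → ℝ) (γ : ℝ) : ℕ∞ :=
  sInf {j : ℕ∞ | ∃ n : ℕ, j = (n : ℕ∞) ∧ ∀ p ∈ closures k r f n, γ ≤ ∑ i, α i * p.2 i}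

def IsSplitSet (S : Set Pt) : Prop :=
  ∃ (π : Fin 2 → ℤ) (π₀ : ℤ), π ≠ 0 ∧
    S = {x : Pt | (π₀ : ℝ) ≤ ∑ j, (π j : ℝ) * x j ∧ ∑ j, (π j : ℝ) * x j ≤ (π₀ : ℝ) + 1}

/-- Triangle of type `T¹`. -/
def IsT1 (S : Set Pt) : Prop :=
  ∃ v : Fin 3 → Pt, AffineIndependent ℝ v ∧ (∀ i, IsIntPt (v i)) ∧
    S = convexHull ℝ (Set.range v) ∧
    ∀ i j, i ≠ j → ∃! z, z ∈ openSegment ℝ (v i) (v j) ∧ IsIntPt z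

/-- Triangle of type `T^{2A}`. -/
def IsT2A (S : Set Pt) : Prop :=
  ∃ v0 v1 v2 : Pt, AffineIndependent ℝ ![v0, v1, v2] ∧ ¬ IsIntPt v0 ∧
    S = convexHull ℝ {v0, v1, v2} ∧
    (∃ z1 z2 : Pt, z1 ≠ z2 ∧ IsIntPt z1 ∧ IsIntPt z2 ∧
      z1 ∈ segment ℝ v1 v2 ∧ z2 ∈ segment ℝ v1 v2) ∧
    (∃! z, z ∈ openSegment ℝ v0 v1 ∧ IsIntPt z) ∧
    (∃! z, z ∈ openSegment ℝ v0 v2 ∧ IsIntPt z)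

/-- Triangle of type `T^{2B}`. -/
def IsT2B (S : Set Pt) : Prop :=
  ∃ v0 v1 v2 : Pt, AffineIndependent ℝ ![v0, v1, v2] ∧ ¬ IsIntPt v0 ∧
    S = convexHull ℝ {v0, v1, v2} ∧
    (∃ z1 z2 : Pt, z1 ≠ z2 ∧ IsIntPt z1 ∧ IsIntPt z2 ∧
      z1 ∈ segment ℝ v1 v2 ∧ z2 ∈ segment ℝ v1 v2) ∧
    (∃! z, z ∈ openSegment ℝ v0 v1 ∧ IsIntPt z) ∧
    (∀ z ∈ openSegment ℝ v0 v2, ¬ IsIntPt z)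

/-- Triangle of type `T³`. -/
def IsT3 (S : Set Pt) : Prop :=
  ∃ v0 v1 v2 : Pt, AffineIndependent ℝ ![v0, v1, v2] ∧
    ¬ IsIntPt v0 ∧ ¬ IsIntPt v1 ∧ ¬ IsIntPt v2 ∧
    S = convexHull ℝ {v0, v1, v2} ∧
    (∃! z, z ∈ openSegment ℝ v0 v1 ∧ IsIntPt z) ∧
    (∃! z, z ∈ openSegment ℝ v1 v2 ∧ IsIntPt z) ∧
    (∃! z, z ∈ openSegment ℝ v0 v2 ∧ IsIntPt z) ∧
    (∀ z, IsIntPt z → z ∈ frontier S →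
      z ∈ openSegment ℝ v0 v1 ∨ z ∈ openSegment ℝ v1 v2 ∨ z ∈ openSegment ℝ v0 v2)

/-- A quadrilateral with vertices `v 0, v 1, v 2, v 3` in cyclic order; each `vᵢ`
is an extreme point of the hull and each side lies on the boundary. -/
def IsQuadWith (S : Set Pt) (v : Fin 4 → Pt) : Prop :=
  S = convexHull ℝ (Set.range v) ∧
  (∀ i, v i ∈ Set.extremePoints ℝ S) ∧
  (∀ i : Fin 4, segment ℝ (v i) (v (i + 1)) ⊆ frontier S)

/-- Quadrilateral of type `Q¹`. -/
def IsQ1 (S : Set Pt) : Prop :=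
  ∃ v : Fin 4 → Pt, IsQuadWith S v ∧
    (∃ z1 z2 : Pt, z1 ≠ z2 ∧ IsIntPt z1 ∧ IsIntPt z2 ∧
      z1 ∈ segment ℝ (v 0) (v 1) ∧ z2 ∈ segment ℝ (v 0) (v 1)) ∧
    (∃ j : Fin 4, j ≠ 0 ∧
      (∀ i : Fin 4, i ≠ 0 → i ≠ j → ∃ z, IsIntPt z ∧ z ∈ segment ℝ (v i) (v (i + 1))) ∧
      (∀ z ∈ openSegment ℝ (v j) (v (j + 1)), ¬ IsIntPt z)) ∧
    (∃ T : Set Pt, (IsT1 T ∨ IsT2A T) ∧ S ⊆ T)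

/-- Quadrilateral of type `Q²`. -/
def IsQ2 (S : Set Pt) : Prop :=
  ∃ v : Fin 4 → Pt, IsQuadWith S v ∧ (∀ i, ¬ IsIntPt (v i)) ∧
    ∀ i : Fin 4, ∃! z, z ∈ openSegment ℝ (v i) (v (i + 1)) ∧ IsIntPt z







lemma zero_mem_coneGen (S : Set Pt) : (0:Pt) ∈ coneGen S :=
  ⟨0, (fun _ => 0), (fun j => j.elim0), fun j => j.elim0, fun j => j.elim0, by simp⟩

lemma smul_mem_coneGen {S : Set Pt} {x : Pt} (hx : x ∈ S) {t : ℝ} (ht : 0 ≤ t) :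
    t • x ∈ coneGen S :=
  ⟨1, fun _ => t, fun _ => x, fun _ => ht, fun _ => hx, by simp⟩

lemma add_mem_coneGen {S : Set Pt} {x y : Pt} (hx : x ∈ coneGen S) (hy : y ∈ coneGen S) :
    x + y ∈ coneGen S := by
  obtain ⟨n, c, v, hc, hv, rfl⟩ := hx
  obtain ⟨m, c', v', hc', hv', rfl⟩ := hy
  refine ⟨n + m, Fin.append c c', Fin.append v v', ?_, ?_, ?_⟩
  · intro j
    refine Fin.addCases (fun i => ?_) (fun i => ?_) j
    · rw [Fin.append_left]; exact hc i
    · rw [Fin.append_right]; exact hc' i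
  · intro j
    refine Fin.addCases (fun i => ?_) (fun i => ?_) j
    · rw [Fin.append_left]; exact hv i
    · rw [Fin.append_right]; exact hv' i
  · rw [Fin.sum_univ_add]
    simp [Fin.append_left, Fin.append_right]

lemma smul_mem_coneGen' {S : Set Pt} {x : Pt} (hx : x ∈ coneGen S) {t : ℝ} (ht : 0 ≤ t) :
    t • x ∈ coneGen S := by
  obtain ⟨n, c, v, hc, hv, rfl⟩ := hx
  exact ⟨n, fun j => t * c j, v, fun j => mul_nonneg ht (hc j), hv,
    by rw [Finset.smul_sum]; simp [smul_smul]⟩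

lemma convex_coneGen (S : Set Pt) : Convex ℝ (coneGen S) := by
  intro x hx y hy a b ha hb _
  exact add_mem_coneGen (smul_mem_coneGen' hx ha) (smul_mem_coneGen' hy hb)

lemma coneGen_subset {S : Set Pt} {T : Set Pt} (h0 : (0:Pt) ∈ T)
    (hadd : ∀ x ∈ T, ∀ y ∈ T, x + y ∈ T)
    (hsmul : ∀ x ∈ S, ∀ t : ℝ, 0 ≤ t → t • x ∈ T) : coneGen S ⊆ T := by
  suffices h : ∀ n (c : Fin n → ℝ) (v : Fin n → Pt), (∀ j, 0 ≤ c j) → (∀ j, v j ∈ S) →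
      ∑ j, c j • v j ∈ T by
    rintro x ⟨n, c, v, hc, hv, rfl⟩; exact h n c v hc hv
  intro n
  induction n with
  | zero => intro c v _ _; simpa using h0
  | succ n ih =>
      intro c v hc hv
      rw [Fin.sum_univ_castSucc]
      exact hadd _ (ih _ _ (fun j => hc _) (fun j => hv _)) _ (hsmul _ (hv _) _ (hc _))

lemma sum_single_smul (k : ℕ) (r : Fin k → Pt) (i : Fin k) (c : ℝ) :
    ∑ j, (Pi.single i c : Fin k → ℝ) j • r j = c • r i := by
  rw [Finset.sum_eq_single i]
  · rw [Pi.single_eq_same]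
  · intro j _ hj; rw [Pi.single_eq_of_ne hj, zero_smul]
  · intro h; exact absurd (Finset.mem_univ i) h

lemma sum_single_mul (k : ℕ) (α : Fin k → ℝ) (i : Fin k) (c : ℝ) :
    ∑ j, α j * (Pi.single i c : Fin k → ℝ) j = α i * c := by
  rw [Finset.sum_eq_single i]
  · rw [Pi.single_eq_same]
  · intro j _ hj; rw [Pi.single_eq_of_ne hj, mul_zero]
  · intro h; exact absurd (Finset.mem_univ i) h







lemma f_mem_inducedSet (k : ℕ) (r : Fin k → Pt) (f : Pt) (α : Fin k → ℝ) :
    f ∈ inducedSet k r f α := by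
  have h := Set.add_mem_add
    (subset_convexHull ℝ ({f} ∪ {x | ∃ i, 0 < α i ∧ x = f + (α i)⁻¹ • r i})
      (Or.inl rfl)) (zero_mem_coneGen {x | ∃ i, α i = 0 ∧ x = r i})
  simpa [inducedSet] using h

lemma convex_inducedSet (k : ℕ) (r : Fin k → Pt) (f : Pt) (α : Fin k → ℝ) :
    Convex ℝ (inducedSet k r f α) :=
  (convex_convexHull ℝ _).add (convex_coneGen _)

lemma inducedSet_ray (k : ℕ) (r : Fin k → Pt) (f : Pt) (α : Fin k → ℝ)
    {i : Fin k} (hαi : α i = 0) :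
    ∀ x ∈ inducedSet k r f α, ∀ t : ℝ, 0 ≤ t → x + t • r i ∈ inducedSet k r f α := by
  rintro x ⟨a, ha, y, hy, rfl⟩ t ht
  rw [add_assoc]
  exact Set.add_mem_add ha (add_mem_coneGen hy (smul_mem_coneGen (S := {x | ∃ i, α i = 0 ∧ x = r i}) ⟨i, hαi, rfl⟩ ht))

lemma inducedSet_subset_slice (k : ℕ) (r : Fin k → Pt) (f : Pt) (α : Fin k → ℝ) :
    inducedSet k r f α ⊆
      {x | ∃ s : Fin k → ℝ, (∀ i, 0 ≤ s i) ∧ x = f + ∑ i, s i • r i ∧ ∑ i, α i * s i ≤ 1} := by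
  rintro x ⟨a, ha, y, hy, rfl⟩
  have hA : ∃ s : Fin k → ℝ, (∀ i, 0 ≤ s i) ∧ a = f + ∑ i, s i • r i ∧ ∑ i, α i * s i ≤ 1 := by
    have := convexHull_min (s := {f} ∪ {x | ∃ i, 0 < α i ∧ x = f + (α i)⁻¹ • r i})
      (t := {x : Pt | ∃ s : Fin k → ℝ, (∀ i, 0 ≤ s i) ∧ x = f + ∑ i, s i • r i ∧
        ∑ i, α i * s i ≤ 1}) ?_ ?_ ha
    · exact this
    · rintro w (rfl | ⟨i, hi, rfl⟩)
      · exact ⟨0, fun i => le_refl 0, by simp, by simp⟩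
      · refine ⟨Pi.single i (α i)⁻¹, ?_, ?_, ?_⟩
        · intro j; rcases eq_or_ne j i with rfl | hji
          · rw [Pi.single_eq_same]; exact inv_nonneg.2 hi.le
          · rw [Pi.single_eq_of_ne hji]
        · rw [sum_single_smul]
        · rw [sum_single_mul, mul_inv_cancel₀ (ne_of_gt hi)]
    · intro p hp q hq b c hb hc hbc
      obtain ⟨sp, hsp0, hspe, hsp1⟩ := hp
      obtain ⟨sq, hsq0, hsqe, hsq1⟩ := hq
      refine ⟨fun i => b * sp i + c * sq i,
        fun i => add_nonneg (mul_nonneg hb (hsp0 i)) (mul_nonneg hc (hsq0 i)), ?_, ?_⟩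
      · have hsum : ∑ i, (b * sp i + c * sq i) • r i
            = b • ∑ i, sp i • r i + c • ∑ i, sq i • r i := by
          rw [Finset.smul_sum, Finset.smul_sum, ← Finset.sum_add_distrib]
          exact Finset.sum_congr rfl (fun i _ => by rw [add_smul, smul_smul, smul_smul])
        rw [hspe, hsqe, hsum]
        have : b • (f + ∑ i, sp i • r i) + c • (f + ∑ i, sq i • r i)
            = (b + c) • f + (b • ∑ i, sp i • r i + c • ∑ i, sq i • r i) := by module
        rw [this, hbc, one_smul]
      · have hsum : ∑ i, α i * (b * sp i + c * sq i)
            = b * ∑ i, α i * sp i + c * ∑ i, α i * sq i := by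
          rw [Finset.mul_sum, Finset.mul_sum, ← Finset.sum_add_distrib]
          exact Finset.sum_congr rfl (fun i _ => by ring)
        rw [hsum]
        have h1 : b * ∑ i, α i * sp i ≤ b * 1 := mul_le_mul_of_nonneg_left hsp1 hb
        have h2 : c * ∑ i, α i * sq i ≤ c * 1 := mul_le_mul_of_nonneg_left hsq1 hc
        linarith
  have hB : ∃ s : Fin k → ℝ, (∀ i, 0 ≤ s i) ∧ y = ∑ i, s i • r i ∧ ∑ i, α i * s i ≤ 0 := by
    refine coneGen_subset (T := {y : Pt | ∃ s : Fin k → ℝ, (∀ i, 0 ≤ s i) ∧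
      y = ∑ i, s i • r i ∧ ∑ i, α i * s i ≤ 0}) ?_ ?_ ?_ hy
    · exact ⟨0, fun i => le_refl 0, by simp, by simp⟩
    · rintro p ⟨sp, hsp0, hspe, hsp1⟩ q ⟨sq, hsq0, hsqe, hsq1⟩
      refine ⟨fun i => sp i + sq i, fun i => add_nonneg (hsp0 i) (hsq0 i), ?_, ?_⟩
      · rw [hspe, hsqe, ← Finset.sum_add_distrib]
        exact Finset.sum_congr rfl (fun i _ => by rw [add_smul])
      · have : ∑ i, α i * (sp i + sq i) = ∑ i, α i * sp i + ∑ i, α i * sq i := by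
          rw [← Finset.sum_add_distrib]
          exact Finset.sum_congr rfl (fun i _ => by ring)
        rw [this]; linarith
    · rintro w ⟨i, hαi, rfl⟩ t ht
      refine ⟨Pi.single i t, ?_, (sum_single_smul k r i t).symm, ?_⟩
      · intro j; rcases eq_or_ne j i with rfl | hji
        · rw [Pi.single_eq_same]; exact ht
        · rw [Pi.single_eq_of_ne hji]
      · rw [sum_single_mul, hαi, zero_mul]
  obtain ⟨sa, hsa0, hsae, hsa1⟩ := hA
  obtain ⟨sb, hsb0, hsbe, hsb1⟩ := hB
  refine ⟨fun i => sa i + sb i, fun i => add_nonneg (hsa0 i) (hsb0 i), ?_, ?_⟩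
  · show a + y = f + ∑ i, (sa i + sb i) • r i
    rw [hsae, hsbe]
    have hsum : ∑ i, (sa i + sb i) • r i = (∑ i, sa i • r i) + ∑ i, sb i • r i := by
      rw [← Finset.sum_add_distrib]
      exact Finset.sum_congr rfl (fun i _ => add_smul _ _ _)
    rw [hsum, add_assoc]
  · show ∑ i, α i * (sa i + sb i) ≤ 1
    have hsum : ∑ i, α i * (sa i + sb i) = ∑ i, α i * sa i + ∑ i, α i * sb i := by
      rw [← Finset.sum_add_distrib]
      exact Finset.sum_congr rfl (fun i _ => by ring)
    rw [hsum]; linarith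

lemma inducedSet_latticeFree (k : ℕ) (r : Fin k → Pt) (f : Pt) (hf_int : ¬ IsIntPt f)
    (α : Fin k → ℝ) (hvalid : ValidIneq k r f α 1) (hα : ∀ i, 0 ≤ α i) :
    ∀ x ∈ interior (inducedSet k r f α), ¬ IsIntPt x := by
  intro x hx hint
  have hxf : x ≠ f := fun h => hf_int (h ▸ hint)
  have hnorm : 0 < ‖x - f‖ := norm_pos_iff.2 (sub_ne_zero.2 hxf)
  obtain ⟨ε, hε, hball⟩ := Metric.mem_nhds_iff.1 (mem_interior_iff_mem_nhds.1 hx)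
  set δ : ℝ := ε / (2 * ‖x - f‖) with hδdef
  have hδ : 0 < δ := div_pos hε (by positivity)
  have hx' : x + δ • (x - f) ∈ inducedSet k r f α := by
    apply hball
    rw [Metric.mem_ball, dist_eq_norm]
    have : x + δ • (x - f) - x = δ • (x - f) := by module
    rw [this, norm_smul, Real.norm_eq_abs, abs_of_pos hδ, hδdef]
    rw [div_mul_eq_mul_div, mul_comm (2:ℝ) ‖x - f‖, ← div_div,
      mul_div_assoc, div_self (ne_of_gt hnorm), mul_one]
    linarith
  obtain ⟨s, hs0, hse, hs1⟩ := inducedSet_subset_slice k r f α hx'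
  have h1δ : (0:ℝ) < 1 + δ := by linarith
  have hxeq : x = f + ∑ i, ((1 + δ)⁻¹ * s i) • r i := by
    have h2 : (1 + δ) • (x - f) = ∑ i, s i • r i := by
      have : x + δ • (x - f) - f = (1 + δ) • (x - f) := by module
      rw [← this, hse]; module
    have h3 : x - f = (1 + δ)⁻¹ • ∑ i, s i • r i := by
      rw [← h2, smul_smul, inv_mul_cancel₀ (ne_of_gt h1δ), one_smul]
    have h4 : (1 + δ)⁻¹ • ∑ i, s i • r i = ∑ i, ((1 + δ)⁻¹ * s i) • r i := by
      rw [Finset.smul_sum]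
      exact Finset.sum_congr rfl (fun i _ => by rw [smul_smul])
    rw [← h4, ← h3]; module
  have hmem : ((x, fun i => (1 + δ)⁻¹ * s i) : Pt × (Fin k → ℝ)) ∈ mixedP k r f :=
    ⟨hint, fun i => mul_nonneg (inv_nonneg.2 h1δ.le) (hs0 i), hxeq⟩
  have hval := hvalid _ hmem
  have hsum : ∑ i, α i * ((1 + δ)⁻¹ * s i) = (1 + δ)⁻¹ * ∑ i, α i * s i := by
    rw [Finset.mul_sum]
    exact Finset.sum_congr rfl (fun i _ => by ring)
  rw [hsum] at hval
  have hlt : (1 + δ)⁻¹ * ∑ i, α i * s i ≤ (1 + δ)⁻¹ * 1 :=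
    mul_le_mul_of_nonneg_left hs1 (inv_nonneg.2 h1δ.le)
  have hinv : (1 + δ)⁻¹ < 1 := by
    rw [inv_lt_one_iff₀]; right; linarith
  linarith

lemma cramer_identity (A B E : ℝ) (x₁ x₂ x : Pt)
    (hEdef : E = -B * (x₂ 0 - x₁ 0) + A * (x₂ 1 - x₁ 1)) (hEne : E ≠ 0) :
    x = x₁ + (((x 1 - x₁ 1) * A - (x 0 - x₁ 0) * B) / E) • (x₂ - x₁)
          + (((x₂ 1 - x₁ 1) * (x 0 - x₁ 0) - (x₂ 0 - x₁ 0) * (x 1 - x₁ 1)) / E)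
            • (![A, B] : Pt) := by
  funext j
  fin_cases j <;>
  · simp only [Fin.zero_eta, Fin.mk_one, Fin.isValue, Pi.add_apply, Pi.smul_apply, Pi.sub_apply,
      Matrix.cons_val_zero, Matrix.cons_val_one, Matrix.head_cons, smul_eq_mul]
    field_simp [hEne]
    rw [hEdef]
    ring

theorem notInSplit_bounded_posCoeffs (k : ℕ)
    (hk : 1 ≤ k)
    (r : Fin k → Pt) (f : Pt)
    (hr_rat : ∀ i, IsRatPt (r i)) (hr_ne : ∀ i, r i ≠ 0)
    (hf_rat : IsRatPt f) (hf_int : ¬ IsIntPt f)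
    (hne : (mixedP k r f).Nonempty)
    (α : Fin k → ℝ) (hα : ∀ i, 0 ≤ α i)
    (hvalid : ValidIneq k r f α 1)
    (hnotsplit : ¬ ∃ T : Set Pt, IsSplitSet T ∧ inducedSet k r f α ⊆ T) :
    Bornology.IsBounded (inducedSet k r f α) ∧ ∀ i, 0 < α i := by
  have hpos : ∀ i, 0 < α i := by
    intro i₀
    rcases (hα i₀).lt_or_eq with hlt | heq
    · exact hlt
    exfalso
    have hαi : α i₀ = 0 := heq.symm
    obtain ⟨q0, hq0⟩ := hr_rat i₀ 0
    obtain ⟨q1, hq1⟩ := hr_rat i₀ 1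
    set p1 : ℤ := q0.num * (q1.den : ℤ) with hp1def
    set p2 : ℤ := q1.num * (q0.den : ℤ) with hp2def
    have hq0den : ((q0.den : ℤ)) ≠ 0 := Int.natCast_ne_zero.2 q0.den_nz
    have hq1den : ((q1.den : ℤ)) ≠ 0 := Int.natCast_ne_zero.2 q1.den_nz
    have hcoord : r i₀ 0 ≠ 0 ∨ r i₀ 1 ≠ 0 := by
      by_contra h
      push_neg at h
      apply hr_ne i₀
      funext j; fin_cases j
      · exact h.1
      · exact h.2
    have hp12 : p1 ≠ 0 ∨ p2 ≠ 0 := by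
      rcases hcoord with h | h
      · left
        have hq : q0 ≠ 0 := by
          intro h0; apply h; rw [hq0, h0]; exact Rat.cast_zero
        exact mul_ne_zero (Rat.num_ne_zero.2 hq) hq1den
      · right
        have hq : q1 ≠ 0 := by
          intro h0; apply h; rw [hq1, h0]; exact Rat.cast_zero
        exact mul_ne_zero (Rat.num_ne_zero.2 hq) hq0den
    set gn : ℕ := Int.gcd p1 p2 with hgndef
    have hgn : 0 < gn := Int.gcd_pos_iff.2 hp12
    set aa : ℤ := p1 / (gn : ℤ) with haadef
    set bb : ℤ := p2 / (gn : ℤ) with hbbdef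
    have hga : (gn : ℤ) * aa = p1 := Int.mul_ediv_cancel' (Int.gcd_dvd_left p1 p2)
    have hgb : (gn : ℤ) * bb = p2 := Int.mul_ediv_cancel' (Int.gcd_dvd_right p1 p2)
    have hcop : Int.gcd aa bb = 1 := Int.gcd_div_gcd_div_gcd hgn
    set A : ℝ := ((aa : ℤ) : ℝ) with hAdef
    set B : ℝ := ((bb : ℤ) : ℝ) with hBdef
    set π : Fin 2 → ℤ := ![-bb, aa] with hπdef
    have hπne : π ≠ 0 := by
      intro h
      have h1 : aa = 0 := by
        have := congrFun h 1; simpa [hπdef] using this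
      have h0 : bb = 0 := by
        have := congrFun h 0; simpa [hπdef, neg_eq_zero] using this
      rw [h1, h0] at hcop
      simp [Int.gcd] at hcop
    have hsum : ∀ x : Pt, ∑ j, ((π j : ℝ)) * x j = -B * x 0 + A * x 1 := by
      intro x
      rw [Fin.sum_univ_two]
      simp only [hπdef, Matrix.cons_val_zero, Matrix.cons_val_one, Matrix.head_cons,
        Int.cast_neg, ← hAdef, ← hBdef]
      try ring
    -- the ray property
    have hden0 : (0:ℝ) < (q0.den : ℝ) := by exact_mod_cast Nat.pos_of_ne_zero q0.den_nz
    have hden1 : (0:ℝ) < (q1.den : ℝ) := by exact_mod_cast Nat.pos_of_ne_zero q1.den_nz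
    have hgnR : (0:ℝ) < (gn : ℝ) := by exact_mod_cast hgn
    have hR1 : (gn : ℝ) * A = (q0.num : ℝ) * (q1.den : ℝ) := by
      rw [hAdef]; exact_mod_cast hga
    have hR2 : (gn : ℝ) * B = (q1.num : ℝ) * (q0.den : ℝ) := by
      rw [hBdef]; exact_mod_cast hgb
    have hrρ : r i₀ = ((gn : ℝ) / ((q0.den : ℝ) * (q1.den : ℝ))) • (![A, B] : Pt) := by
      funext j; fin_cases j
      · show r i₀ 0 = ((gn : ℝ) / ((q0.den : ℝ) * (q1.den : ℝ))) * A
        rw [hq0, Rat.cast_def]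
        rw [div_mul_eq_mul_div, div_eq_div_iff (ne_of_gt hden0) (by positivity)]
        linear_combination (-(q0.den : ℝ)) * hR1
      · show r i₀ 1 = ((gn : ℝ) / ((q0.den : ℝ) * (q1.den : ℝ))) * B
        rw [hq1, Rat.cast_def]
        rw [div_mul_eq_mul_div, div_eq_div_iff (ne_of_gt hden1) (by positivity)]
        linear_combination (-(q1.den : ℝ)) * hR2
    have hμ : (0:ℝ) < (gn : ℝ) / ((q0.den : ℝ) * (q1.den : ℝ)) := by positivity
    have hray : ∀ x ∈ inducedSet k r f α, ∀ t : ℝ, 0 ≤ t →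
        x + t • (![A, B] : Pt) ∈ inducedSet k r f α := by
      intro x hx t ht
      have h := inducedSet_ray k r f α hαi x hx
        (t / ((gn : ℝ) / ((q0.den : ℝ) * (q1.den : ℝ)))) (div_nonneg ht hμ.le)
      rw [hrρ, smul_smul, div_mul_cancel₀ _ (ne_of_gt hμ)] at h
      exact h
    by_cases hstr : ∃ m : ℤ, (∃ x ∈ inducedSet k r f α, -B * x 0 + A * x 1 < (m:ℝ)) ∧
        (∃ x ∈ inducedSet k r f α, (m:ℝ) < -B * x 0 + A * x 1)
    · -- straddle: find integer point in the interior
      obtain ⟨m, ⟨x₁, hx₁L, hx₁⟩, ⟨x₂, hx₂L, hx₂⟩⟩ := hstr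
      set E : ℝ := -B * (x₂ 0 - x₁ 0) + A * (x₂ 1 - x₁ 1) with hEdef
      have hEpos : 0 < E := by rw [hEdef]; linarith
      have hcop2 : Int.gcd (-bb) aa = 1 := by
        have h' : Int.gcd (-bb) aa = Int.gcd bb aa := by simp
        rw [h', Int.gcd_comm]; exact hcop
      obtain ⟨sz, tz, hst⟩ := Int.isCoprime_iff_gcd_eq_one.2 hcop2
      have hstR : (sz : ℝ) * (-B) + (tz : ℝ) * A = 1 := by
        rw [hAdef, hBdef]; exact_mod_cast hst
      set w : ℝ := ((x₂ 1 - x₁ 1) * (((m * sz : ℤ) : ℝ) - x₁ 0)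
        - (x₂ 0 - x₁ 0) * (((m * tz : ℤ) : ℝ) - x₁ 1)) / E with hwdef
      set t : ℤ := ⌊-w⌋ + 1 with htdef
      have hwt : 0 < w + (t : ℝ) := by
        have := Int.lt_floor_add_one (-w)
        rw [htdef]; push_cast; linarith
      set z : Pt := ![((m * sz : ℤ) : ℝ) + (t : ℝ) * A, ((m * tz : ℤ) : ℝ) + (t : ℝ) * B]
        with hzdef
      have hz0 : z 0 = ((m * sz : ℤ) : ℝ) + (t : ℝ) * A := by rw [hzdef]; rfl
      have hz1 : z 1 = ((m * tz : ℤ) : ℝ) + (t : ℝ) * B := by rw [hzdef]; rfl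
      have hzint : IsIntPt z := by
        intro j; fin_cases j
        · exact ⟨m * sz + t * aa, by rw [show z ⟨0, by omega⟩ = z 0 from rfl, hz0, hAdef]; push_cast; ring⟩
        · exact ⟨m * tz + t * bb, by rw [show z ⟨1, by omega⟩ = z 1 from rfl, hz1, hBdef]; push_cast; ring⟩
      set U : Set Pt :=
        ({x : Pt | 0 < ((x 1 - x₁ 1) * A - (x 0 - x₁ 0) * B) / E} ∩
         {x : Pt | ((x 1 - x₁ 1) * A - (x 0 - x₁ 0) * B) / E < 1}) ∩
        {x : Pt | 0 < ((x₂ 1 - x₁ 1) * (x 0 - x₁ 0) - (x₂ 0 - x₁ 0) * (x 1 - x₁ 1)) / E}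
        with hUdef
      have hcu : Continuous (fun x : Pt => ((x 1 - x₁ 1) * A - (x 0 - x₁ 0) * B) / E) := by
        fun_prop
      have hcv : Continuous (fun x : Pt =>
          ((x₂ 1 - x₁ 1) * (x 0 - x₁ 0) - (x₂ 0 - x₁ 0) * (x 1 - x₁ 1)) / E) := by
        fun_prop
      have hUopen : IsOpen U :=
        (((isOpen_lt continuous_const hcu).inter (isOpen_lt hcu continuous_const)).inter
          (isOpen_lt continuous_const hcv))
      have hUL : U ⊆ inducedSet k r f α := by
        rintro x ⟨⟨h1, h2⟩, h3⟩
        have hid := cramer_identity A B E x₁ x₂ x hEdef (ne_of_gt hEpos)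
        rw [hid]
        have hbase : x₁ + (((x 1 - x₁ 1) * A - (x 0 - x₁ 0) * B) / E) • (x₂ - x₁)
            ∈ inducedSet k r f α := by
          have hconv := convex_inducedSet k r f α hx₁L hx₂L
            (a := 1 - ((x 1 - x₁ 1) * A - (x 0 - x₁ 0) * B) / E)
            (b := ((x 1 - x₁ 1) * A - (x 0 - x₁ 0) * B) / E)
            (by simp only [mem_setOf_eq] at h2; linarith)
            (by simp only [mem_setOf_eq] at h1; exact h1.le) (by ring)
          have heq : (1 - ((x 1 - x₁ 1) * A - (x 0 - x₁ 0) * B) / E) • x₁ +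
              (((x 1 - x₁ 1) * A - (x 0 - x₁ 0) * B) / E) • x₂
              = x₁ + (((x 1 - x₁ 1) * A - (x 0 - x₁ 0) * B) / E) • (x₂ - x₁) := by
            module
          rwa [heq] at hconv
        exact hray _ hbase _ (by simp only [mem_setOf_eq] at h3; exact h3.le)
      have hzψ : (z 1 - x₁ 1) * A - (z 0 - x₁ 0) * B = (m : ℝ) - (-B * x₁ 0 + A * x₁ 1) := by
        rw [hz0, hz1]; push_cast; linear_combination (m : ℝ) * hstR
      have hzU : z ∈ U := by
        refine ⟨⟨?_, ?_⟩, ?_⟩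
        · show 0 < ((z 1 - x₁ 1) * A - (z 0 - x₁ 0) * B) / E
          rw [hzψ]; exact div_pos (by linarith) hEpos
        · show ((z 1 - x₁ 1) * A - (z 0 - x₁ 0) * B) / E < 1
          rw [hzψ, div_lt_one hEpos, hEdef]; linarith
        · show 0 < ((x₂ 1 - x₁ 1) * (z 0 - x₁ 0) - (x₂ 0 - x₁ 0) * (z 1 - x₁ 1)) / E
          have hwE : w * E = (x₂ 1 - x₁ 1) * (((m * sz : ℤ) : ℝ) - x₁ 0)
              - (x₂ 0 - x₁ 0) * (((m * tz : ℤ) : ℝ) - x₁ 1) := by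
            rw [hwdef]
            exact div_mul_cancel₀ _ (ne_of_gt hEpos)
          have hnum : (x₂ 1 - x₁ 1) * (z 0 - x₁ 0) - (x₂ 0 - x₁ 0) * (z 1 - x₁ 1)
              = (w + (t : ℝ)) * E := by
            rw [hz0, hz1]
            linear_combination (-1 : ℝ) * hwE + (-(t : ℝ)) * hEdef
          rw [hnum, mul_div_assoc, div_self (ne_of_gt hEpos), mul_one]
          exact hwt
      exact inducedSet_latticeFree k r f hf_int α hvalid hα z
        (interior_maximal hUL hUopen hzU) hzint
    · -- no straddle: there is a split set containing L
      have key : ∀ m : ℤ, (∀ x ∈ inducedSet k r f α, (m:ℝ) ≤ -B * x 0 + A * x 1) ∨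
          (∀ x ∈ inducedSet k r f α, -B * x 0 + A * x 1 ≤ (m:ℝ)) := by
        intro m
        by_contra hcon
        push_neg at hcon
        obtain ⟨⟨x₁, hx₁L, hx₁⟩, ⟨x₂, hx₂L, hx₂⟩⟩ := hcon
        exact hstr ⟨m, ⟨x₁, hx₁L, hx₁⟩, ⟨x₂, hx₂L, hx₂⟩⟩
      set c : ℝ := -B * f 0 + A * f 1 with hcdef
      have hfL : f ∈ inducedSet k r f α := f_mem_inducedSet k r f α
      rcases key ⌊c⌋ with hlow | hhigh
      · rcases key (⌊c⌋ + 1) with hlow2 | hhigh2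
        · have h := hlow2 f hfL
          have h2 := Int.lt_floor_add_one c
          rw [← hcdef] at h
          push_cast at h
          linarith
        · refine hnotsplit ⟨_, ⟨π, ⌊c⌋, hπne, rfl⟩, ?_⟩
          intro x hx
          constructor
          · rw [hsum x]; exact hlow x hx
          · rw [hsum x]
            have := hhigh2 x hx
            push_cast at this ⊢
            linarith
      · rcases key (⌊c⌋ - 1) with hlow2 | hhigh2
        · refine hnotsplit ⟨_, ⟨π, ⌊c⌋ - 1, hπne, rfl⟩, ?_⟩
          intro x hx
          constructor
          · rw [hsum x]
            have := hlow2 x hx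
            push_cast at this ⊢
            linarith
          · rw [hsum x]
            have := hhigh x hx
            push_cast at this ⊢
            linarith
        · have h := hhigh2 f hfL
          have h2 := Int.floor_le c
          rw [← hcdef] at h
          push_cast at h
          linarith
  refine ⟨?_, hpos⟩
  have hD : {x : Pt | ∃ i, α i = 0 ∧ x = r i} = ∅ := by
    ext x
    simp only [Set.mem_setOf_eq, Set.mem_empty_iff_false, iff_false]
    rintro ⟨i, h, _⟩
    exact (hpos i).ne' h
  have hcone : coneGen (∅ : Set Pt) = {0} := by
    ext x
    constructor
    · rintro ⟨n, c, v, hc, hv, rfl⟩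
      have : IsEmpty (Fin n) := ⟨fun j => (hv j).elim⟩
      rw [Finset.univ_eq_empty, Finset.sum_empty]
      rfl
    · intro h
      rw [Set.mem_singleton_iff] at h
      subst h
      exact zero_mem_coneGen ∅
  have hLhull : inducedSet k r f α
      = convexHull ℝ ({f} ∪ {x | ∃ i, 0 < α i ∧ x = f + (α i)⁻¹ • r i}) := by
    rw [inducedSet, hD, hcone]
    simp [Set.add_singleton]
  rw [hLhull]
  apply isBounded_convexHull.2
  have hsub : ({f} ∪ {x : Pt | ∃ i, 0 < α i ∧ x = f + (α i)⁻¹ • r i}) ⊆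
      insert f (Set.range (fun i => f + (α i)⁻¹ • r i)) := by
    rintro x (rfl | ⟨i, _, rfl⟩)
    · exact Set.mem_insert _ _
    · exact Set.mem_insert_of_mem _ ⟨i, rfl⟩
  exact (((Set.finite_range _).insert f).isBounded).subset hsub
end

section
/- (Simple Lifting.) Let ∑_{i=1}^k αᵢ sᵢ ≥ 1 with α ∈ ℝ^k, α ≥ 0, be a valid inequality for conv(P(R,f)) of split rank η with respect to P(R,f)⁰. Let r^{k+1} ∈ ℚ² ∖ {0} lie in the cone generated by {r¹,…,r^k}, and let α_{k+1} > 0 be such that f + r^{k+1}/α_{k+1} lies on the topological boundary of L_α. Then ∑_{i=1}^k αᵢ sᵢ + α_{k+1} s_{k+1} ≥ 1 is a valid inequality for conv(P([R r^{k+1}],f)) of split rank at most η with respect to P([R r^{k+1}],f)⁰. -/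
open Set Pointwise

section AuxLifting

open Finset

/-- Carathéodory-type lemma for cones: any nonnegative combination can be rewritten
as a nonnegative combination over a linearly independent subfamily. -/
lemma cone_carath {E : Type*} [AddCommGroup E] [Module ℝ E] {m : ℕ} (w : Fin m → E)
    (s : Finset (Fin m)) (c : Fin m → ℝ) (hc : ∀ j, 0 ≤ c j) :
    ∃ t : Finset (Fin m), t ⊆ s ∧ ∃ d : Fin m → ℝ, (∀ j, 0 ≤ d j) ∧
      LinearIndependent ℝ (fun j : t => w j) ∧
      ∑ j ∈ t, d j • w j = ∑ j ∈ s, c j • w j := by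
  classical
  induction s using Finset.strongInduction generalizing c with
  | _ s ih =>
    by_cases hli : LinearIndependent ℝ (fun j : s => w j)
    · exact ⟨s, Finset.Subset.refl s, c, hc, hli, rfl⟩
    · obtain ⟨g, hg0, i₀, hi₀⟩ := Fintype.not_linearIndependent_iff.mp hli
      set G : Fin m → ℝ := fun j => if h : j ∈ s then g ⟨j, h⟩ else 0 with hGdef
      have hGsum : ∑ j ∈ s, G j • w j = 0 := by
        rw [← Finset.sum_attach s (fun j => G j • w j)]
        rw [← hg0]
        refine Finset.sum_congr rfl fun x _ => ?_
        simp [hGdef, x.2]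
      have key : ∀ H : Fin m → ℝ, (∑ j ∈ s, H j • w j = 0) → (∃ j ∈ s, 0 < H j) →
          ∃ t : Finset (Fin m), t ⊆ s ∧ ∃ d : Fin m → ℝ, (∀ j, 0 ≤ d j) ∧
            LinearIndependent ℝ (fun j : t => w j) ∧
            ∑ j ∈ t, d j • w j = ∑ j ∈ s, c j • w j := by
        rintro H hHsum ⟨j₁, hj₁s, hj₁⟩
        set T : Finset (Fin m) := s.filter (fun j => 0 < H j) with hTdef
        have hTne : T.Nonempty := ⟨j₁, by simp [hTdef, hj₁s, hj₁]⟩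
        obtain ⟨j₀, hj₀T, hmin⟩ := T.exists_min_image (fun j => c j / H j) hTne
        have hj₀s : j₀ ∈ s := (Finset.mem_filter.mp hj₀T).1
        have hj₀pos : 0 < H j₀ := (Finset.mem_filter.mp hj₀T).2
        set τ : ℝ := c j₀ / H j₀ with hτdef
        have hτ0 : 0 ≤ τ := div_nonneg (hc j₀) hj₀pos.le
        set c' : Fin m → ℝ := fun j => if j ∈ s.erase j₀ then c j - τ * H j else 0 with hc'def
        have hc'0 : ∀ j, 0 ≤ c' j := by
          intro j
          simp only [hc'def]
          split_ifs with hj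
          · rcases le_or_gt (H j) 0 with hHj | hHj
            · nlinarith [hc j]
            · have hjT : j ∈ T := Finset.mem_filter.mpr ⟨Finset.mem_of_mem_erase hj, hHj⟩
              have := hmin j hjT
              rw [le_div_iff₀ hHj] at this
              linarith
          · exact le_rfl
        have hsum' : ∑ j ∈ s.erase j₀, c' j • w j = ∑ j ∈ s, c j • w j := by
          have h1 : ∑ j ∈ s.erase j₀, c' j • w j
              = ∑ j ∈ s.erase j₀, (c j - τ * H j) • w j :=
            Finset.sum_congr rfl fun j hj => by simp only [hc'def, if_pos hj]
          have h2 : ∑ j ∈ s.erase j₀, (c j - τ * H j) • w j + (c j₀ - τ * H j₀) • w j₀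
              = ∑ j ∈ s, (c j - τ * H j) • w j := Finset.sum_erase_add s _ hj₀s
          have h3 : c j₀ - τ * H j₀ = 0 := by
            rw [hτdef, div_mul_cancel₀ _ hj₀pos.ne']; ring
          have h4 : ∑ j ∈ s, (c j - τ * H j) • w j = ∑ j ∈ s, c j • w j := by
            simp only [sub_smul, Finset.sum_sub_distrib]
            have : ∑ j ∈ s, (τ * H j) • w j = τ • ∑ j ∈ s, H j • w j := by
              rw [Finset.smul_sum]
              exact Finset.sum_congr rfl fun j _ => by rw [smul_smul]
            rw [this, hHsum, smul_zero, sub_zero]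
          rw [h1, ← h4, ← h2, h3, zero_smul, add_zero]
        obtain ⟨t, hts, d, hd0, hdli, hdsum⟩ :=
          ih (s.erase j₀) (Finset.erase_ssubset hj₀s) c' hc'0
        exact ⟨t, hts.trans (Finset.erase_subset _ _), d, hd0, hdli, by rw [hdsum, hsum']⟩
      rcases lt_trichotomy (g i₀) 0 with hneg | hzero | hpos
      · refine key (-G) ?_ ⟨i₀, i₀.2, ?_⟩
        · simp only [Pi.neg_apply, neg_smul, Finset.sum_neg_distrib]
          rw [hGsum, neg_zero]
        · have : G i₀ = g i₀ := by simp [hGdef, i₀.2]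
          simp only [Pi.neg_apply, this]
          linarith
      · exact absurd hzero hi₀
      · refine key G hGsum ⟨i₀, i₀.2, ?_⟩
        have : G i₀ = g i₀ := by simp [hGdef, i₀.2]
        rw [this]; exact hpos

end AuxLifting
section AuxLifting2

open Finset

/-- A finitely generated cone in a finite-dimensional space is closed. -/
lemma isClosed_fcone {E : Type*} [NormedAddCommGroup E] [NormedSpace ℝ E]
    [FiniteDimensional ℝ E] {m : ℕ} (w : Fin m → E) :
    IsClosed {x : E | ∃ c : Fin m → ℝ, (∀ j, 0 ≤ c j) ∧ x = ∑ j, c j • w j} := by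
  classical
  have hEq : {x : E | ∃ c : Fin m → ℝ, (∀ j, 0 ≤ c j) ∧ x = ∑ j, c j • w j}
      = ⋃ (t : Finset (Fin m)) (_ : LinearIndependent ℝ (fun j : t => w j)),
        {x : E | ∃ d : t → ℝ, (∀ j, 0 ≤ d j) ∧ x = ∑ j, d j • w (j : Fin m)} := by
    ext x
    simp only [Set.mem_setOf_eq, Set.mem_iUnion]
    constructor
    · rintro ⟨c, hc, rfl⟩
      obtain ⟨t, -, d, hd0, hdli, hdsum⟩ := cone_carath w Finset.univ c hc
      refine ⟨t, hdli, fun j => d j, fun j => hd0 j, ?_⟩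
      rw [← hdsum, Finset.univ_eq_attach, ← Finset.sum_attach t (fun j => d j • w j)]
    · rintro ⟨t, hli, d, hd0, rfl⟩
      refine ⟨fun j => if h : j ∈ t then d ⟨j, h⟩ else 0, fun j => ?_, ?_⟩
      · dsimp only; split_ifs with h; exacts [hd0 _, le_rfl]
      · dsimp only
        rw [← Finset.sum_subset (Finset.subset_univ t)
            (fun j _ hj => by rw [dif_neg hj, zero_smul]),
          ← Finset.sum_attach t (fun j => (if h : j ∈ t then d ⟨j, h⟩ else 0) • w j),
          Finset.univ_eq_attach]
        exact Finset.sum_congr rfl fun x _ => by simp [x.2]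
  rw [hEq]
  refine isClosed_iUnion_of_finite fun t => isClosed_iUnion_of_finite fun hli => ?_
  set T : (↥t → ℝ) →ₗ[ℝ] E :=
    { toFun := fun d => ∑ j, d j • w (j : Fin m)
      map_add' := fun a b => by
        simp only [Pi.add_apply, add_smul, Finset.sum_add_distrib]
      map_smul' := fun a b => by
        simp only [Pi.smul_apply, smul_eq_mul, RingHom.id_apply, ← smul_smul,
          ← Finset.smul_sum] } with hTdef
  have hker : LinearMap.ker T = ⊥ := by
    rw [LinearMap.ker_eq_bot']
    intro d hd
    have := Fintype.linearIndependent_iff.mp hli d hd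
    funext j
    exact this j
  have himg : {x : E | ∃ d : t → ℝ, (∀ j, 0 ≤ d j) ∧ x = ∑ j, d j • w (j : Fin m)}
      = T '' {d : t → ℝ | ∀ j, 0 ≤ d j} := by
    ext x
    constructor
    · rintro ⟨d, hd0, rfl⟩; exact ⟨d, hd0, rfl⟩
    · rintro ⟨d, hd0, rfl⟩; exact ⟨d, hd0, rfl⟩
  rw [himg]
  refine (LinearMap.isClosedEmbedding_of_injective hker).isClosedMap _ ?_
  have : {d : t → ℝ | ∀ j, 0 ≤ d j} = ⋂ j, {d : t → ℝ | 0 ≤ d j} := by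
    ext d; simp [Set.mem_iInter]
  rw [this]
  exact isClosed_iInter fun j => isClosed_le continuous_const (continuous_apply j)

end AuxLifting2
section AuxLifting3

open Finset

/-- The closed convex superset of the induced lattice-free set used for lifting. -/
def Lset (k : ℕ) (r : Fin k → Pt) (f : Pt) (α : Fin k → ℝ) : Set Pt :=
  {x | ∃ lam : Fin k → ℝ, (∀ i, 0 ≤ lam i) ∧ (∑ i, α i * lam i) ≤ 1 ∧
    x = f + ∑ i, lam i • r i}

lemma coneGen_elim {k : ℕ} (r : Fin k → Pt) (P : Fin k → Prop)
    {y : Pt} (hy : y ∈ coneGen {x | ∃ i, P i ∧ x = r i}) :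
    ∃ μ : Fin k → ℝ, (∀ i, 0 ≤ μ i) ∧ (∀ i, μ i ≠ 0 → P i) ∧ y = ∑ i, μ i • r i := by
  classical
  obtain ⟨n, c, v, hc, hv, rfl⟩ := hy
  choose g hgP hgv using hv
  refine ⟨fun i => ∑ j ∈ Finset.univ.filter (fun j => g j = i), c j,
    fun i => Finset.sum_nonneg fun j _ => hc j, fun i hne => ?_, ?_⟩
  · by_contra hPi
    apply hne
    have : Finset.univ.filter (fun j => g j = i) = ∅ := by
      rw [Finset.filter_eq_empty_iff]
      intro j _ hji
      exact hPi (hji ▸ hgP j)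
    simp [this]
  · rw [← Finset.sum_fiberwise Finset.univ g (fun j => c j • v j)]
    refine Finset.sum_congr rfl fun i _ => ?_
    rw [Finset.sum_smul]
    refine Finset.sum_congr rfl fun j hj => ?_
    have hji : g j = i := (Finset.mem_filter.mp hj).2
    rw [hgv j, hji]

lemma lset_convex (k : ℕ) (r : Fin k → Pt) (f : Pt) (α : Fin k → ℝ) :
    Convex ℝ (Lset k r f α) := by
  rintro x ⟨lx, hlx0, hlx1, rfl⟩ y ⟨ly, hly0, hly1, rfl⟩ a b ha hb hab
  refine ⟨fun i => a * lx i + b * ly i,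
    fun i => by have := hlx0 i; have := hly0 i; positivity, ?_, ?_⟩
  · have hsum : ∑ i, α i * (a * lx i + b * ly i)
        = a * ∑ i, α i * lx i + b * ∑ i, α i * ly i := by
      rw [Finset.mul_sum, Finset.mul_sum, ← Finset.sum_add_distrib]
      exact Finset.sum_congr rfl fun i _ => by ring
    rw [hsum]
    calc a * ∑ i, α i * lx i + b * ∑ i, α i * ly i ≤ a * 1 + b * 1 :=
          add_le_add (mul_le_mul_of_nonneg_left hlx1 ha)
            (mul_le_mul_of_nonneg_left hly1 hb)
      _ = 1 := by rw [mul_one, mul_one, hab]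
  · have hz : ∑ i, (a * lx i + b * ly i) • r i
        = a • ∑ i, lx i • r i + b • ∑ i, ly i • r i := by
      rw [Finset.smul_sum, Finset.smul_sum, ← Finset.sum_add_distrib]
      refine Finset.sum_congr rfl fun i _ => ?_
      rw [add_smul, mul_smul, mul_smul]
    calc a • (f + ∑ i, lx i • r i) + b • (f + ∑ i, ly i • r i)
        = (a + b) • f + (a • ∑ i, lx i • r i + b • ∑ i, ly i • r i) := by
          rw [smul_add, smul_add, add_smul]; abel
      _ = f + ∑ i, (a * lx i + b * ly i) • r i := by rw [hab, one_smul, hz]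

lemma induced_subset_Lset (k : ℕ) (r : Fin k → Pt) (f : Pt) (α : Fin k → ℝ)
    (hα : ∀ i, 0 ≤ α i) : inducedSet k r f α ⊆ Lset k r f α := by
  classical
  intro x hx
  rcases Set.mem_add.mp hx with ⟨a, ha, c, hc, hsum⟩
  obtain ⟨μ, hμ0, hμP, hcμ⟩ := coneGen_elim r (fun i => α i = 0) hc
  have haL : a ∈ Lset k r f α := by
    refine convexHull_min ?_ (lset_convex k r f α) ha
    rintro z (hz | ⟨i, hi, rfl⟩)
    · refine ⟨0, fun i => le_rfl, by simp, ?_⟩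
      simp only [Set.mem_singleton_iff] at hz
      simp [hz]
    · refine ⟨Pi.single i (α i)⁻¹, fun j => ?_, ?_, ?_⟩
      · rcases eq_or_ne j i with rfl | hji
        · simp [inv_nonneg.mpr (hα j)]
        · simp [Pi.single_eq_of_ne hji]
      · rw [Finset.sum_eq_single_of_mem i (Finset.mem_univ i)
          (fun j _ hji => by simp [Pi.single_eq_of_ne hji])]
        simp [mul_inv_cancel₀ (ne_of_gt hi)]
      · rw [Finset.sum_eq_single_of_mem i (Finset.mem_univ i)
          (fun j _ hji => by simp [Pi.single_eq_of_ne hji])]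
        simp
  obtain ⟨lam, hlam0, hlam1, hlameq⟩ := haL
  refine ⟨fun i => lam i + μ i, fun i => add_nonneg (hlam0 i) (hμ0 i), ?_, ?_⟩
  · have h0 : ∀ i, α i * μ i = 0 := by
      intro i
      rcases eq_or_ne (μ i) 0 with h | h
      · rw [h, mul_zero]
      · rw [hμP i h, zero_mul]
    calc ∑ i, α i * (lam i + μ i) = ∑ i, (α i * lam i + α i * μ i) :=
          Finset.sum_congr rfl fun i _ => by ring
      _ = ∑ i, α i * lam i := by
          rw [Finset.sum_add_distrib]
          simp [h0]
      _ ≤ 1 := hlam1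
  · rw [← hsum, hlameq, hcμ]
    have : ∑ i, (lam i + μ i) • r i = ∑ i, lam i • r i + ∑ i, μ i • r i := by
      rw [← Finset.sum_add_distrib]
      exact Finset.sum_congr rfl fun i _ => add_smul _ _ _
    rw [this, add_assoc]

lemma lset_closed (k : ℕ) (r : Fin k → Pt) (f : Pt) (α : Fin k → ℝ) :
    IsClosed (Lset k r f α) := by
  classical
  set w : Fin (k + 1) → Pt × ℝ :=
    Fin.snoc (fun i => (r i, α i)) ((0 : Pt), (1 : ℝ)) with hwdef
  have hEq : Lset k r f α = (fun x : Pt => (x - f, (1 : ℝ))) ⁻¹'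
      {y : Pt × ℝ | ∃ c : Fin (k + 1) → ℝ, (∀ j, 0 ≤ c j) ∧ y = ∑ j, c j • w j} := by
    ext x
    simp only [Set.mem_preimage, Set.mem_setOf_eq, Lset]
    constructor
    · rintro ⟨lam, hlam0, hlam1, rfl⟩
      refine ⟨Fin.snoc lam (1 - ∑ i, α i * lam i), fun j => ?_, ?_⟩
      · refine Fin.lastCases ?_ ?_ j
        · rw [Fin.snoc_last]; linarith
        · intro i; rw [Fin.snoc_castSucc]; exact hlam0 i
      · rw [Fin.sum_univ_castSucc]
        simp only [Fin.snoc_castSucc, Fin.snoc_last, hwdef]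
        refine Prod.ext ?_ ?_
        · simp only [Prod.fst_add, Prod.fst_sum, Prod.smul_mk, Prod.mk_add_mk]
          simp
        · simp only [Prod.snd_add, Prod.snd_sum, Prod.smul_mk, Prod.mk_add_mk]
          simp only [smul_eq_mul, mul_one]
          rw [Finset.sum_congr rfl (fun i _ => mul_comm (lam i) (α i))]
          ring
    · rintro ⟨c, hc0, hceq⟩
      rw [Fin.sum_univ_castSucc] at hceq
      simp only [hwdef, Fin.snoc_castSucc, Fin.snoc_last] at hceq
      have h1 : x - f = ∑ i, c i.castSucc • r i := by
        have := congrArg Prod.fst hceq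
        simpa [Prod.fst_sum] using this
      have h2 : (1 : ℝ) = ∑ i, c i.castSucc * α i + c (Fin.last k) := by
        have := congrArg Prod.snd hceq
        simpa [Prod.snd_sum] using this
      refine ⟨fun i => c i.castSucc, fun i => hc0 _, ?_, ?_⟩
      · rw [Finset.sum_congr rfl (fun i _ => mul_comm (α i) (c i.castSucc))]
        have := hc0 (Fin.last k)
        linarith
      · rw [← h1]; abel
  rw [hEq]
  exact (isClosed_fcone w).preimage ((continuous_id.sub continuous_const).prodMk
    continuous_const)

lemma extract_lam (k : ℕ) (r : Fin k → Pt) (f : Pt) (α : Fin k → ℝ)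
    (hα : ∀ i, 0 ≤ α i) (rnew : Pt) (anew : ℝ) (hanew : 0 < anew)
    (hbdry : f + anew⁻¹ • rnew ∈ frontier (inducedSet k r f α)) :
    ∃ lam : Fin k → ℝ, (∀ i, 0 ≤ lam i) ∧ (∑ i, α i * lam i) ≤ anew ∧
      rnew = ∑ i, lam i • r i := by
  have hmem : f + anew⁻¹ • rnew ∈ Lset k r f α := by
    have h1 : f + anew⁻¹ • rnew ∈ closure (inducedSet k r f α) :=
      frontier_subset_closure hbdry
    have h2 : closure (inducedSet k r f α) ⊆ Lset k r f α := by
      rw [← (lset_closed k r f α).closure_eq]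
      exact closure_mono (induced_subset_Lset k r f α hα)
    exact h2 h1
  obtain ⟨lam₀, hlam₀0, hlam₀1, heq⟩ := hmem
  have heq' : anew⁻¹ • rnew = ∑ i, lam₀ i • r i := by
    have := heq
    rwa [add_right_inj] at this
  refine ⟨fun i => anew * lam₀ i, fun i => mul_nonneg hanew.le (hlam₀0 i), ?_, ?_⟩
  · show (∑ i, α i * (anew * lam₀ i)) ≤ anew
    have h5 : ∑ i, α i * (anew * lam₀ i) = anew * ∑ i, α i * lam₀ i := by
      rw [Finset.mul_sum]
      exact Finset.sum_congr rfl fun i _ => by ring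
    rw [h5]
    calc anew * ∑ i, α i * lam₀ i ≤ anew * 1 := mul_le_mul_of_nonneg_left hlam₀1 hanew.le
      _ = anew := mul_one anew
  · show rnew = ∑ i, (anew * lam₀ i) • r i
    have : rnew = anew • (anew⁻¹ • rnew) := by
      rw [smul_smul, mul_inv_cancel₀ (ne_of_gt hanew), one_smul]
    rw [this, heq', Finset.smul_sum]
    exact Finset.sum_congr rfl fun i _ => by rw [smul_smul]

end AuxLifting3
section AuxLifting4

open Finset

/-- The linear projection used for lifting: fold the new variable back into the old ones. -/
def phiMap (k : ℕ) (lam : Fin k → ℝ) :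
    (Pt × (Fin (k + 1) → ℝ)) →ₗ[ℝ] (Pt × (Fin k → ℝ)) where
  toFun p := (p.1, fun i => p.2 i.castSucc + p.2 (Fin.last k) * lam i)
  map_add' p q := by
    refine Prod.ext rfl ?_
    funext i
    simp only [Prod.snd_add, Pi.add_apply]
    ring
  map_smul' c p := by
    refine Prod.ext rfl ?_
    funext i
    simp only [Prod.smul_snd, Pi.smul_apply, smul_eq_mul, RingHom.id_apply]
    ring

lemma phiMap_fst (k : ℕ) (lam : Fin k → ℝ) (p : Pt × (Fin (k + 1) → ℝ)) :
    (phiMap k lam p).1 = p.1 := rfl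

lemma phiMap_snd (k : ℕ) (lam : Fin k → ℝ) (p : Pt × (Fin (k + 1) → ℝ)) (i : Fin k) :
    (phiMap k lam p).2 i = p.2 i.castSucc + p.2 (Fin.last k) * lam i := rfl

lemma snoc_sum_smul {k : ℕ} (r : Fin k → Pt) (rnew : Pt) (lam : Fin k → ℝ)
    (hr : rnew = ∑ i, lam i • r i) (s : Fin (k + 1) → ℝ) :
    ∑ i, s i • (Fin.snoc r rnew : Fin (k + 1) → Pt) i
      = ∑ i, (s i.castSucc + s (Fin.last k) * lam i) • r i := by
  rw [Fin.sum_univ_castSucc]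
  simp only [Fin.snoc_castSucc, Fin.snoc_last, hr]
  rw [Finset.smul_sum, ← Finset.sum_add_distrib]
  refine Finset.sum_congr rfl fun i _ => ?_
  rw [add_smul, smul_smul]

lemma snoc_sum_mul {k : ℕ} (α : Fin k → ℝ) (anew : ℝ) (s : Fin (k + 1) → ℝ) :
    ∑ i, (Fin.snoc α anew : Fin (k + 1) → ℝ) i * s i
      = (∑ i, α i * s i.castSucc) + anew * s (Fin.last k) := by
  rw [Fin.sum_univ_castSucc]
  simp only [Fin.snoc_castSucc, Fin.snoc_last]

lemma relax_convex (k : ℕ) (r : Fin k → Pt) (f : Pt) : Convex ℝ (relaxP k r f) := by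
  rintro p ⟨hp0, hp1⟩ q ⟨hq0, hq1⟩ a b ha hb hab
  constructor
  · intro i
    have : (a • p + b • q).2 i = a * p.2 i + b * q.2 i := rfl
    rw [this]
    have := hp0 i; have := hq0 i
    positivity
  · have h1 : (a • p + b • q).1 = a • p.1 + b • q.1 := rfl
    have h2 : ∀ i, (a • p + b • q).2 i = a * p.2 i + b * q.2 i := fun i => rfl
    rw [h1, hp1, hq1]
    have hz : ∑ i, (a • p + b • q).2 i • r i
        = a • ∑ i, p.2 i • r i + b • ∑ i, q.2 i • r i := by
      rw [Finset.smul_sum, Finset.smul_sum, ← Finset.sum_add_distrib]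
      refine Finset.sum_congr rfl fun i _ => ?_
      rw [h2 i, add_smul, mul_smul, mul_smul]
    rw [hz]
    calc a • (f + ∑ i, p.2 i • r i) + b • (f + ∑ i, q.2 i • r i)
        = (a + b) • f + (a • ∑ i, p.2 i • r i + b • ∑ i, q.2 i • r i) := by
          rw [smul_add, smul_add, add_smul]; abel
      _ = f + (a • ∑ i, p.2 i • r i + b • ∑ i, q.2 i • r i) := by rw [hab, one_smul]

lemma closures_subset_relax (k : ℕ) (r : Fin k → Pt) (f : Pt) :
    ∀ n, closures k r f n ⊆ relaxP k r f := by
  intro n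
  induction n with
  | zero => exact subset_rfl
  | succ n ih =>
    intro p hp
    have h0 := Set.mem_iInter.mp (Set.mem_iInter.mp hp 0) 0
    refine convexHull_min ?_ (relax_convex k r f) h0
    rintro q (hq | hq) <;> exact ih hq.1

lemma phi_mem_relax {k : ℕ} (r : Fin k → Pt) (f : Pt) (rnew : Pt) (lam : Fin k → ℝ)
    (hlam0 : ∀ i, 0 ≤ lam i) (hr : rnew = ∑ i, lam i • r i)
    {p : Pt × (Fin (k + 1) → ℝ)} (hp : p ∈ relaxP (k + 1) (Fin.snoc r rnew) f) :
    phiMap k lam p ∈ relaxP k r f := by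
  obtain ⟨hp0, hp1⟩ := hp
  constructor
  · intro i
    rw [phiMap_snd]
    exact add_nonneg (hp0 _) (mul_nonneg (hp0 _) (hlam0 i))
  · rw [phiMap_fst, hp1]
    congr 1
    rw [snoc_sum_smul r rnew lam hr p.2]
    rfl

lemma phi_mem_mixed {k : ℕ} (r : Fin k → Pt) (f : Pt) (rnew : Pt) (lam : Fin k → ℝ)
    (hlam0 : ∀ i, 0 ≤ lam i) (hr : rnew = ∑ i, lam i • r i)
    {p : Pt × (Fin (k + 1) → ℝ)} (hp : p ∈ mixedP (k + 1) (Fin.snoc r rnew) f) :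
    phiMap k lam p ∈ mixedP k r f := by
  obtain ⟨hint, hp0, hp1⟩ := hp
  exact ⟨hint, (phi_mem_relax r f rnew lam hlam0 hr ⟨hp0, hp1⟩).1,
    (phi_mem_relax r f rnew lam hlam0 hr ⟨hp0, hp1⟩).2⟩

lemma phi_mem_closures {k : ℕ} (r : Fin k → Pt) (f : Pt) (rnew : Pt) (lam : Fin k → ℝ)
    (hlam0 : ∀ i, 0 ≤ lam i) (hr : rnew = ∑ i, lam i • r i) :
    ∀ n (p : Pt × (Fin (k + 1) → ℝ)), p ∈ closures (k + 1) (Fin.snoc r rnew) f n →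
      phiMap k lam p ∈ closures k r f n := by
  intro n
  induction n with
  | zero => exact fun p hp => phi_mem_relax r f rnew lam hlam0 hr hp
  | succ n ih =>
    intro p hp
    refine Set.mem_iInter.mpr fun π => Set.mem_iInter.mpr fun π₀ => ?_
    have hp' := Set.mem_iInter.mp (Set.mem_iInter.mp hp π) π₀
    have himg : phiMap k lam p ∈ (phiMap k lam) ''
        (convexHull ℝ ((closures (k + 1) (Fin.snoc r rnew) f n ∩
            {q | ∑ j, (π j : ℝ) * q.1 j ≤ (π₀ : ℝ)}) ∪
          (closures (k + 1) (Fin.snoc r rnew) f n ∩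
            {q | (π₀ : ℝ) + 1 ≤ ∑ j, (π j : ℝ) * q.1 j}))) := ⟨p, hp', rfl⟩
    rw [(phiMap k lam).image_convexHull] at himg
    refine convexHull_mono ?_ himg
    rintro q ⟨u, hu, rfl⟩
    rcases hu with ⟨huC, huH⟩ | ⟨huC, huH⟩
    · exact Or.inl ⟨ih u huC, by simpa [phiMap_fst] using huH⟩
    · exact Or.inr ⟨ih u huC, by simpa [phiMap_fst] using huH⟩

lemma final_bound {k : ℕ} (α : Fin k → ℝ) (anew : ℝ) (lam : Fin k → ℝ)
    (hsum : ∑ i, α i * lam i ≤ anew) (s : Fin (k + 1) → ℝ) (hs : 0 ≤ s (Fin.last k))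
    (h1 : 1 ≤ ∑ i, α i * (s i.castSucc + s (Fin.last k) * lam i)) :
    1 ≤ ∑ i, (Fin.snoc α anew : Fin (k + 1) → ℝ) i * s i := by
  rw [snoc_sum_mul]
  have h2 : ∑ i, α i * (s i.castSucc + s (Fin.last k) * lam i)
      = (∑ i, α i * s i.castSucc) + (∑ i, α i * lam i) * s (Fin.last k) := by
    rw [Finset.sum_mul, ← Finset.sum_add_distrib]
    exact Finset.sum_congr rfl fun i _ => by ring
  rw [h2] at h1
  have h3 : (∑ i, α i * lam i) * s (Fin.last k) ≤ anew * s (Fin.last k) :=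
    mul_le_mul_of_nonneg_right hsum hs
  linarith

end AuxLifting4

theorem simple_lifting (k : ℕ)
    (hk : 1 ≤ k)
    (r : Fin k → Pt) (f : Pt)
    (hr_rat : ∀ i, IsRatPt (r i)) (hr_ne : ∀ i, r i ≠ 0)
    (hf_rat : IsRatPt f) (hf_int : ¬ IsIntPt f)
    (hne : (mixedP k r f).Nonempty)
    (α : Fin k → ℝ) (hα : ∀ i, 0 ≤ α i)
    (hvalid : ValidIneq k r f α 1)
    (η : ℕ∞) (hη : splitRank k r f α 1 = η)
    (rnew : Pt) (hrnew_rat : IsRatPt rnew) (hrnew_ne : rnew ≠ 0)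
    (hrnew_cone : rnew ∈ coneGen (Set.range r))
    (anew : ℝ) (hanew : 0 < anew)
    (hbdry : f + anew⁻¹ • rnew ∈ frontier (inducedSet k r f α)) :
    ValidIneq (k + 1) (Fin.snoc r rnew) f (Fin.snoc α anew) 1 ∧
    splitRank (k + 1) (Fin.snoc r rnew) f (Fin.snoc α anew) 1 ≤ η := by
  obtain ⟨lam, hlam0, hlamsum, hlamr⟩ := extract_lam k r f α hα rnew anew hanew hbdry
  constructor
  · intro p hp
    have h1 := hvalid _ (phi_mem_mixed r f rnew lam hlam0 hlamr hp)
    have h1' : 1 ≤ ∑ i, α i * (p.2 i.castSucc + p.2 (Fin.last k) * lam i) := by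
      simpa [phiMap_snd] using h1
    exact final_bound α anew lam hlamsum p.2 (hp.2.1 _) h1'
  · rw [← hη]
    apply sInf_le_sInf
    rintro j ⟨n, rfl, hvalidn⟩
    refine ⟨n, rfl, fun p hp => ?_⟩
    have hrel := closures_subset_relax (k + 1) (Fin.snoc r rnew) f n hp
    have h1 := hvalidn _ (phi_mem_closures r f rnew lam hlam0 hlamr n p hp)
    have h1' : 1 ≤ ∑ i, α i * (p.2 i.castSucc + p.2 (Fin.last k) * lam i) := by
      simpa [phiMap_snd] using h1
    exact final_bound α anew lam hlamsum p.2 (hrel.1 _) h1'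
end
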